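/- arXiv:math/0009032 — 5 statements merged into one kernel-verified Lean document; each statement's English description precedes it below -/
import Mathlib

section
/- Let R be an algebra over an infinite field F. Then every unit g ∈ U(R) that is algebraic over F commutes with every element of the FC-subring ∇(R) = {a ∈ R : [U(R) : C_{U(R)}(a)] < ∞}. -/
/-- The centralizer of a ring element `a` inside the unit group `Rˣ`. -/
def unitCentralizer {R : Type*} [Ring R] (a : R) : Subgroup Rˣ where
  carrier := {u : Rˣ | (u : R) * a = a * (u : R)}
  one_mem' := by simp
  mul_mem' := by
    intro u v hu hv
    have hu' : Commute ((u : Rˣ) : R) a := hu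
    have hv' : Commute ((v : Rˣ) : R) a := hv
    show ((u * v : Rˣ) : R) * a = a * ((u * v : Rˣ) : R)
    rw [Units.val_mul]
    exact hu'.mul_left hv'
  inv_mem' := by
    intro u hu
    have hu' : Commute ((u : Rˣ) : R) a := hu
    exact hu'.units_inv_left

@[simp] lemma mem_unitCentralizer {R : Type*} [Ring R] {a : R} {u : Rˣ} :
    u ∈ unitCentralizer a ↔ (u : R) * a = a * (u : R) := Iff.rfl

/-- The FC-subring `∇(R)` of a ring `R`: the set of elements whose centralizer
in the unit group has finite index. -/
def FCSubring (R : Type*) [Ring R] : Set R :=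
  {a : R | (unitCentralizer a).FiniteIndex}

/-- An infinite subgroup `H ≤ Rˣ` is an ω-subgroup if for every nonzero Lie
commutator `x*y - y*x` only finitely many elements of the form `1 - h`, `h ∈ H`,
annihilate it on the left. -/
def IsOmegaSubgroup {R : Type*} [Ring R] (H : Subgroup Rˣ) : Prop :=
  (H : Set Rˣ).Infinite ∧
    ∀ x y : R, x * y - y * x ≠ 0 →
      {h : Rˣ | h ∈ H ∧ (1 - (h : R)) * (x * y - y * x) = 0}.Finite

/-- The FC-radical `ΔU(R)` of the unit group: the subgroup of units having only
finitely many conjugates, i.e. whose centralizer has finite index. -/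
def FCRadical (R : Type*) [Ring R] : Subgroup Rˣ where
  carrier := {u : Rˣ | (unitCentralizer (u : R)).FiniteIndex}
  one_mem' := by
    have h : unitCentralizer ((1 : Rˣ) : R) = ⊤ := by
      ext u; simp
    show (unitCentralizer ((1 : Rˣ) : R)).FiniteIndex
    rw [h]
    infer_instance
  mul_mem' := by
    intro u v hu hv
    have hle : unitCentralizer (u : R) ⊓ unitCentralizer (v : R) ≤
        unitCentralizer ((u * v : Rˣ) : R) := by
      intro w hw
      have hwu : (w : R) * (u : R) = (u : R) * (w : R) := hw.1
      have hwv : (w : R) * (v : R) = (v : R) * (w : R) := hw.2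
      show (w : R) * ((u * v : Rˣ) : R) = ((u * v : Rˣ) : R) * (w : R)
      rw [Units.val_mul, ← mul_assoc, hwu, mul_assoc, hwv, ← mul_assoc]
    haveI : (unitCentralizer (u : R)).FiniteIndex := hu
    haveI : (unitCentralizer (v : R)).FiniteIndex := hv
    exact Subgroup.finiteIndex_of_le hle
  inv_mem' := by
    intro u hu
    have h : unitCentralizer ((u⁻¹ : Rˣ) : R) = unitCentralizer (u : R) := by
      ext w
      constructor
      · intro hw
        have hw' : Commute ((w : Rˣ) : R) ((u⁻¹ : Rˣ) : R) := hw
        have h2 : Commute ((w : Rˣ) : R) ((u⁻¹⁻¹ : Rˣ) : R) := hw'.units_inv_right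
        rw [inv_inv] at h2
        exact h2
      · intro hw
        have hw' : Commute ((w : Rˣ) : R) ((u : Rˣ) : R) := hw
        exact hw'.units_inv_right
    show (unitCentralizer ((u⁻¹ : Rˣ) : R)).FiniteIndex
    rw [h]
    exact hu

@[simp] lemma mem_FCRadical {R : Type*} [Ring R] {u : Rˣ} :
    u ∈ FCRadical R ↔ (unitCentralizer (u : R)).FiniteIndex := Iff.rfl

/-- Over an infinite field, every algebraic unit commutes with every
element of the FC-subring `∇(R)`. -/
theorem algebraic_unit_centralizes_fcSubring (F : Type*) [Field F] [Infinite F]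
    (R : Type*) [Ring R] [Algebra F R]
    (g : Rˣ) (hg : IsAlgebraic F (g : R)) :
    ∀ a ∈ FCSubring R, (g : R) * a = a * (g : R) := by
  intro a ha
  obtain ⟨p, hp0, hpg⟩ := hg
  -- For every `x` that is not a root of `p`, `algebraMap F R x - g` is a unit.
  have hunit : ∀ x : F, ¬ p.IsRoot x → IsUnit (algebraMap F R x - (g : R)) := by
    intro x hx
    obtain ⟨q, hq⟩ := Polynomial.X_sub_C_dvd_sub_C_eval (a := x) (p := p)
    set c : F := p.eval x with hc
    have hc0 : c ≠ 0 := hx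
    -- apply `aeval g` to `hq`
    have key : (algebraMap F R x - (g : R)) * (Polynomial.aeval (g : R) q) =
        algebraMap F R c := by
      have := congrArg (Polynomial.aeval (g : R)) hq
      simp only [map_sub, map_mul, hpg, Polynomial.aeval_X, Polynomial.aeval_C,
        zero_sub] at this
      have h' : - algebraMap F R c = ((g : R) - algebraMap F R x) * Polynomial.aeval (g : R) q :=
        this
      calc (algebraMap F R x - (g : R)) * (Polynomial.aeval (g : R) q)
          = -(((g : R) - algebraMap F R x) * Polynomial.aeval (g : R) q) := by noncomm_ring
        _ = - (- algebraMap F R c) := by rw [← h']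
        _ = algebraMap F R c := by rw [neg_neg]
    -- the candidate inverse
    refine ⟨⟨algebraMap F R x - (g : R),
      Polynomial.aeval (g : R) (q * Polynomial.C c⁻¹), ?_, ?_⟩, rfl⟩
    · have : (algebraMap F R x - (g : R)) * Polynomial.aeval (g : R) (q * Polynomial.C c⁻¹)
          = algebraMap F R c * algebraMap F R c⁻¹ := by
        rw [map_mul, Polynomial.aeval_C, ← mul_assoc, key]
      rw [this, ← map_mul, mul_inv_cancel₀ hc0, map_one]
    · -- commute: everything is a polynomial in `g`
      have hcomm : Polynomial.aeval (g : R) (q * Polynomial.C c⁻¹) *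
          (algebraMap F R x - (g : R)) =
          (algebraMap F R x - (g : R)) *
            Polynomial.aeval (g : R) (q * Polynomial.C c⁻¹) := by
        have h1 : algebraMap F R x - (g : R) =
            Polynomial.aeval (g : R) (Polynomial.C x - Polynomial.X) := by
          simp
        rw [h1, ← map_mul, ← map_mul, mul_comm]
      rw [hcomm]
      have : (algebraMap F R x - (g : R)) * Polynomial.aeval (g : R) (q * Polynomial.C c⁻¹)
          = algebraMap F R c * algebraMap F R c⁻¹ := by
        rw [map_mul, Polynomial.aeval_C, ← mul_assoc, key]
      rw [this, ← map_mul, mul_inv_cancel₀ hc0, map_one]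
  -- The set of non-roots is infinite.
  have hTinf : {x : F | ¬ p.IsRoot x}.Infinite := by
    have := (Polynomial.finite_setOf_isRoot hp0).infinite_compl
    simpa [Set.compl_setOf] using this
  set T : Set F := {x : F | ¬ p.IsRoot x}
  haveI : Infinite T := hTinf.to_subtype
  have hCA : (unitCentralizer a).FiniteIndex := ha
  haveI : (unitCentralizer a).FiniteIndex := hCA
  haveI : Finite (Rˣ ⧸ unitCentralizer a) :=
    Subgroup.finite_quotient_of_finiteIndex
  -- pigeonhole on the cosets
  let u : T → Rˣ := fun x => (hunit x.1 x.2).unit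
  have hu : ∀ x : T, ((u x : Rˣ) : R) = algebraMap F R x.1 - (g : R) := fun x =>
    (hunit x.1 x.2).unit_spec
  obtain ⟨x, y, hxy, hfeq⟩ :=
    Finite.exists_ne_map_eq_of_infinite
      (fun x : T => (QuotientGroup.mk (u x) : Rˣ ⧸ unitCentralizer a))
  have hmem : (u x)⁻¹ * (u y) ∈ unitCentralizer a := (QuotientGroup.eq).mp hfeq
  have hd : (y.1 : F) - x.1 ≠ 0 := sub_ne_zero.mpr fun h => hxy (Subtype.ext h.symm)
  set d : F := y.1 - x.1 with hdd
  -- value of `(u x)⁻¹ * (u y)`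
  have hval : (((u x)⁻¹ * (u y) : Rˣ) : R) =
      1 + ((u x)⁻¹ : Rˣ) * algebraMap F R d := by
    have hVU : ((u y : Rˣ) : R) = ((u x : Rˣ) : R) + algebraMap F R d := by
      rw [hu, hu, hdd, map_sub]; abel
    rw [Units.val_mul, hVU, mul_add, Units.inv_mul]
  have hmem' : (((u x)⁻¹ * (u y) : Rˣ) : R) * a = a * (((u x)⁻¹ * (u y) : Rˣ) : R) := hmem
  rw [hval] at hmem'
  -- cancel to get that `(u x)⁻¹` commutes with `a`
  have hstep : (((u x)⁻¹ : Rˣ) : R) * a * algebraMap F R d =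
      a * (((u x)⁻¹ : Rˣ) : R) * algebraMap F R d := by
    have hda : algebraMap F R d * a = a * algebraMap F R d := Algebra.commutes d a
    have h1 : a + (((u x)⁻¹ : Rˣ) : R) * algebraMap F R d * a =
        a + a * ((((u x)⁻¹ : Rˣ) : R) * algebraMap F R d) := by
      calc a + (((u x)⁻¹ : Rˣ) : R) * algebraMap F R d * a
          = (1 + (((u x)⁻¹ : Rˣ) : R) * algebraMap F R d) * a := by noncomm_ring
        _ = a * (1 + (((u x)⁻¹ : Rˣ) : R) * algebraMap F R d) := hmem'
        _ = a + a * ((((u x)⁻¹ : Rˣ) : R) * algebraMap F R d) := by noncomm_ring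
    have h2 : (((u x)⁻¹ : Rˣ) : R) * algebraMap F R d * a =
        a * ((((u x)⁻¹ : Rˣ) : R) * algebraMap F R d) := by
      have := add_left_cancel h1
      exact this
    calc (((u x)⁻¹ : Rˣ) : R) * a * algebraMap F R d
        = (((u x)⁻¹ : Rˣ) : R) * (a * algebraMap F R d) := by noncomm_ring
      _ = (((u x)⁻¹ : Rˣ) : R) * (algebraMap F R d * a) := by rw [hda]
      _ = (((u x)⁻¹ : Rˣ) : R) * algebraMap F R d * a := by noncomm_ring
      _ = a * ((((u x)⁻¹ : Rˣ) : R) * algebraMap F R d) := h2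
      _ = a * (((u x)⁻¹ : Rˣ) : R) * algebraMap F R d := by noncomm_ring
  have hinv : (((u x)⁻¹ : Rˣ) : R) * a = a * (((u x)⁻¹ : Rˣ) : R) := by
    have := congrArg (· * algebraMap F R d⁻¹) hstep
    simpa [mul_assoc, ← map_mul, mul_inv_cancel₀ hd] using this
  -- hence `u x` commutes with `a`
  have hUa : Commute ((u x : Rˣ) : R) a := by
    have h1 : Commute (((u x)⁻¹ : Rˣ) : R) a := hinv
    have h2 := h1.units_inv_left
    rwa [inv_inv] at h2
  -- conclude
  have hAx : Commute (algebraMap F R x.1) a := Algebra.commutes _ _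
  have hGx : Commute (algebraMap F R x.1 - (g : R)) a := by rw [← hu]; exact hUa
  have : Commute (algebraMap F R x.1 - (algebraMap F R x.1 - (g : R))) a :=
    hAx.sub_left hGx
  rw [sub_sub_cancel] at this
  exact this
end

section
/- Let R be an algebra over an infinite field F. If R is generated as an F-algebra by a set of units each of which is algebraic over F, then the FC-subring ∇(R) = {a ∈ R : [U(R) : C_{U(R)}(a)] < ∞} is contained in the center of R. -/
open Polynomial in
lemma aux_isUnit_sub_algebraMap {F R : Type*} [Field F] [Ring R] [Algebra F R]
    {s : R} {p : F[X]} (hp : aeval s p = 0) {lam : F} (h : p.eval lam ≠ 0) :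
    IsUnit (s - algebraMap F R lam) := by
  obtain ⟨q, hq⟩ := X_sub_C_dvd_sub_C_eval (a := lam) (p := p)
  have e1 : (s - algebraMap F R lam) * aeval s q = - algebraMap F R (p.eval lam) := by
    have := congrArg (aeval s) hq
    simp only [map_sub, map_mul, aeval_X, aeval_C, hp, zero_sub] at this
    exact this.symm
  have e2 : aeval s q * (s - algebraMap F R lam) = - algebraMap F R (p.eval lam) := by
    have hq' : p - C (p.eval lam) = q * (X - C lam) := by rw [hq]; ring
    have := congrArg (aeval s) hq'
    simp only [map_sub, map_mul, aeval_X, aeval_C, hp, zero_sub] at this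
    exact this.symm
  refine ⟨⟨s - algebraMap F R lam, algebraMap F R (-(p.eval lam)⁻¹) * aeval s q, ?_, ?_⟩, rfl⟩
  · calc (s - algebraMap F R lam) * (algebraMap F R (-(p.eval lam)⁻¹) * aeval s q)
        = algebraMap F R (-(p.eval lam)⁻¹) * ((s - algebraMap F R lam) * aeval s q) := by
          rw [← mul_assoc, ← Algebra.commutes, mul_assoc]
      _ = 1 := by
          rw [e1, ← map_neg, ← map_mul]
          rw [show -(p.eval lam)⁻¹ * -(p.eval lam) = 1 by field_simp]
          exact map_one _
  · calc algebraMap F R (-(p.eval lam)⁻¹) * aeval s q * (s - algebraMap F R lam)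
        = algebraMap F R (-(p.eval lam)⁻¹) * (aeval s q * (s - algebraMap F R lam)) := by
          rw [mul_assoc]
      _ = 1 := by
          rw [e2, ← map_neg, ← map_mul]
          rw [show -(p.eval lam)⁻¹ * -(p.eval lam) = 1 by field_simp]
          exact map_one _

lemma aux_commute {F R : Type*} [Field F] [Infinite F] [Ring R] [Algebra F R]
    (a s : R) (ha : (unitCentralizer a).FiniteIndex) (halg : IsAlgebraic F s) :
    Commute s a := by
  classical
  obtain ⟨p, hp0, hps⟩ := halg
  haveI := ha
  haveI : Finite (Rˣ ⧸ unitCentralizer a) :=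
    Subgroup.finite_quotient_of_finiteIndex
  set Λ : Set F := {lam | p.eval lam ≠ 0} with hΛdef
  have hΛ : Λ.Infinite := by
    have hfin : Set.Finite {x : F | p.IsRoot x} := Polynomial.finite_setOf_isRoot hp0
    have : Λ = {x : F | p.IsRoot x}ᶜ := by
      ext x; simp [hΛdef, Polynomial.IsRoot]
    rw [this]
    exact hfin.infinite_compl
  set f : F → Rˣ ⧸ unitCentralizer a := fun lam =>
    if h : p.eval lam ≠ 0 then QuotientGroup.mk (aux_isUnit_sub_algebraMap hps h).unit
    else QuotientGroup.mk 1 with hfdef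
  obtain ⟨lam, hlam, mu, hmu, hne, heq⟩ :=
    hΛ.exists_ne_map_eq_of_mapsTo (f := f) (Set.mapsTo_univ f Λ) Set.finite_univ
  have hlam' : p.eval lam ≠ 0 := hlam
  have hmu' : p.eval mu ≠ 0 := hmu
  set ul : Rˣ := (aux_isUnit_sub_algebraMap hps hlam').unit with huldef
  set um : Rˣ := (aux_isUnit_sub_algebraMap hps hmu').unit with humdef
  have hulval : (ul : R) = s - algebraMap F R lam := IsUnit.unit_spec _
  have humval : (um : R) = s - algebraMap F R mu := IsUnit.unit_spec _
  have heq' : QuotientGroup.mk (s := unitCentralizer a) ul = QuotientGroup.mk um := by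
    have := heq
    rw [hfdef] at this
    simpa [dif_pos hlam', dif_pos hmu'] using this
  have hc : ul⁻¹ * um ∈ unitCentralizer a := by
    rw [QuotientGroup.eq] at heq'
    exact heq'
  set c : Rˣ := ul⁻¹ * um with hcdef
  have hcomm : Commute (c : R) a := hc
  have hd : lam - mu ≠ 0 := sub_ne_zero_of_ne hne
  have hcval : (c : R) = 1 + algebraMap F R (lam - mu) * ((ul⁻¹ : Rˣ) : R) := by
    have hum2 : (um : R) = (ul : R) + algebraMap F R (lam - mu) := by
      rw [hulval, humval, map_sub]; abel
    calc (c : R) = ((ul⁻¹ : Rˣ) : R) * (um : R) := by rw [hcdef, Units.val_mul]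
      _ = ((ul⁻¹ : Rˣ) : R) * (ul : R)
          + ((ul⁻¹ : Rˣ) : R) * algebraMap F R (lam - mu) := by rw [hum2, mul_add]
      _ = 1 + algebraMap F R (lam - mu) * ((ul⁻¹ : Rˣ) : R) := by
          rw [Units.inv_mul, ← Algebra.commutes]
  have hinvval : ((ul⁻¹ : Rˣ) : R) = algebraMap F R (lam - mu)⁻¹ * ((c : R) - 1) := by
    rw [hcval]
    rw [add_sub_cancel_left, ← mul_assoc, ← map_mul, inv_mul_cancel₀ hd, map_one, one_mul]
  have h1 : Commute ((ul⁻¹ : Rˣ) : R) a := by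
    rw [hinvval]
    have hca : Commute (algebraMap F R (lam - mu)⁻¹) a := Algebra.commutes _ a
    exact hca.mul_left (hcomm.sub_left (Commute.one_left a))
  have h2 : Commute (ul : R) a := by
    have := h1.units_inv_left
    simpa using this
  have h3 : Commute s a := by
    have : s = (ul : R) + algebraMap F R lam := by rw [hulval]; abel
    rw [this]
    have hca : Commute (algebraMap F R lam) a := Algebra.commutes _ a
    exact h2.add_left hca
  exact h3

/-- If an algebra over an infinite field is generated by algebraic units,
then `∇(R)` lies in the center of `R`. -/
theorem fcSubring_central_of_generated_by_algebraic_units (F : Type*) [Field F]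
    [Infinite F] (R : Type*) [Ring R] [Algebra F R]
    (S : Set R) (hS : ∀ s ∈ S, IsUnit s ∧ IsAlgebraic F s)
    (hgen : Algebra.adjoin F S = ⊤) :
    FCSubring R ⊆ Set.center R := by
  intro a ha
  have ha' : (unitCentralizer a).FiniteIndex := ha
  rw [Semigroup.mem_center_iff]
  intro g
  have hle : Algebra.adjoin F S ≤ Subalgebra.centralizer F {a} := by
    apply Algebra.adjoin_le
    intro s hs
    show s ∈ Subalgebra.centralizer F {a}
    rw [Subalgebra.mem_centralizer_iff]
    intro y hy
    rw [Set.mem_singleton_iff] at hy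
    rw [hy]
    exact (aux_commute a s ha' (hS s hs).2).symm
  rw [hgen] at hle
  have hg : g ∈ Subalgebra.centralizer F ({a} : Set R) := hle (by trivial)
  rw [Subalgebra.mem_centralizer_iff] at hg
  exact (hg a rfl).symm
end

section
/- Let R be an algebra over an infinite field F. Then every element of finite order of the FC-radical ΔU = {u ∈ U(R) : [U(R) : C_{U(R)}(u)] < ∞} commutes with every element of the FC-subring ∇(R); in particular, any two finite-order elements of ΔU commute, so the torsion subgroup t(ΔU) is abelian. -/
theorem finOrder_comm_FCSubring (F : Type*) [Field F] [Infinite F]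
    (R : Type*) [Ring R] [Algebra F R] :
    ∀ u : Rˣ, u ∈ FCRadical R → IsOfFinOrder u →
      ∀ a ∈ FCSubring R, (u : R) * a = a * (u : R) := by
  intro u hu hfin a ha
  obtain ⟨n, hn, hun⟩ := hfin.exists_pow_eq_one
  have hunR : (u : R) ^ n = 1 := by
    rw [← Units.val_pow_eq_pow_val, hun, Units.val_one]
  -- the set of λ with λ^n = 1 is finite
  have hroots : {l : F | l ^ n = 1}.Finite := by
    apply Set.Finite.subset (Polynomial.nthRootsFinset n (1 : F)).finite_toSet
    intro l hl
    exact (Polynomial.mem_nthRootsFinset hn (1 : F)).2 hl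
  have hΛ : {l : F | l ^ n = 1}ᶜ.Infinite := hroots.infinite_compl
  haveI : Infinite ({l : F | l ^ n = 1}ᶜ : Set F) := hΛ.to_subtype
  -- for λ with λ^n ≠ 1, (λ•1 - u) is a unit
  have hW : ∀ l : ({l : F | l ^ n = 1}ᶜ : Set F),
      IsUnit (algebraMap F R l - (u : R)) := by
    rintro ⟨l, hl⟩
    have hl' : (l : F) ^ n - 1 ≠ 0 := sub_ne_zero.2 hl
    have hcomm : Commute (algebraMap F R l) ((u : R)) := Algebra.commutes l _
    set s : R := ∑ i ∈ Finset.range n, (algebraMap F R l) ^ i * (u : R) ^ (n - 1 - i) with hs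
    have h1 : (algebraMap F R l - (u : R)) * s = algebraMap F R (l ^ n - 1) := by
      rw [hs, hcomm.mul_geom_sum₂, map_sub, map_pow, map_one, hunR]
    have h2 : s * (algebraMap F R l - (u : R)) = algebraMap F R (l ^ n - 1) := by
      rw [hs, hcomm.geom_sum₂_mul, map_sub, map_pow, map_one, hunR]
    refine ⟨⟨algebraMap F R l - (u : R), algebraMap F R (l ^ n - 1)⁻¹ * s, ?_, ?_⟩, rfl⟩
    · calc (algebraMap F R l - (u : R)) * (algebraMap F R (l ^ n - 1)⁻¹ * s)
          = algebraMap F R (l ^ n - 1)⁻¹ * ((algebraMap F R l - (u : R)) * s) := by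
            rw [← mul_assoc, ← Algebra.commutes ((l ^ n - 1)⁻¹), mul_assoc]
        _ = 1 := by rw [h1, ← map_mul, inv_mul_cancel₀ hl', map_one]
    · calc (algebraMap F R (l ^ n - 1)⁻¹ * s) * (algebraMap F R l - (u : R))
          = algebraMap F R (l ^ n - 1)⁻¹ * algebraMap F R (l ^ n - 1) := by
            rw [mul_assoc, h2]
        _ = 1 := by rw [← map_mul, inv_mul_cancel₀ hl', map_one]
  set W : ({l : F | l ^ n = 1}ᶜ : Set F) → Rˣ := fun l => (hW l).unit with hWdef
  have hWval : ∀ l, ((W l : Rˣ) : R) = algebraMap F R l - (u : R) := fun l => (hW l).unit_spec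
  -- pigeonhole into the finite quotient by the centralizer of a
  haveI : (unitCentralizer a).FiniteIndex := ha
  haveI : Finite (Rˣ ⧸ unitCentralizer a) := Subgroup.finite_quotient_of_finiteIndex
  obtain ⟨l₁, l₂, hne, heq⟩ := Finite.exists_ne_map_eq_of_infinite
    (fun l => ((W l : Rˣ) : Rˣ ⧸ unitCentralizer a))
  have hmem : (W l₁)⁻¹ * W l₂ ∈ unitCentralizer a := QuotientGroup.eq.1 heq
  have hc : (((W l₁)⁻¹ * W l₂ : Rˣ) : R) * a = a * (((W l₁)⁻¹ * W l₂ : Rˣ) : R) := hmem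
  rw [Units.val_mul] at hc
  -- b is the common conjugate
  set b : R := (W l₁ : R) * a * ((W l₁)⁻¹ : Rˣ) with hb
  have key : ∀ lw : Rˣ, (lw : R) * a * ((W l₁)⁻¹ : Rˣ) = b → False ∨ True := fun _ _ => Or.inr trivial
  have h1 : (W l₁ : R) * a = b * (W l₁ : R) := by
    simp [hb, mul_assoc]
  have h2 : (W l₂ : R) * a = b * (W l₂ : R) := by
    have := congrArg (fun x => (W l₁ : R) * x) hc
    rw [← mul_assoc, ← mul_assoc, Units.mul_inv, one_mul] at this
    rw [this, hb]
    simp [mul_assoc]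
  -- subtract the two relations
  have hsub : algebraMap F R ((l₁ : F) - l₂) * a = b * algebraMap F R ((l₁ : F) - l₂) := by
    have := congrArg₂ (fun x y : R => x - y) h1 h2
    simp only [hWval, sub_mul, mul_sub] at this
    rw [map_sub]
    calc (algebraMap F R l₁ - algebraMap F R l₂) * a
        = (algebraMap F R l₁ * a - (u : R) * a) - (algebraMap F R l₂ * a - (u : R) * a) := by
          noncomm_ring
      _ = (b * algebraMap F R l₁ - b * (u : R)) - (b * algebraMap F R l₂ - b * (u : R)) := this
      _ = b * (algebraMap F R l₁ - algebraMap F R l₂) := by noncomm_ring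
  have hne' : ((l₁ : F) - l₂) ≠ 0 := sub_ne_zero.2 (fun h => hne (Subtype.ext h))
  have hab : a = b := by
    have h3 : ((l₁ : F) - l₂) • (a - b) = 0 := by
      rw [Algebra.smul_def, mul_sub, hsub, ← Algebra.commutes ((l₁ : F) - l₂) b, sub_self]
    have h0 : a - b = 0 := by
      have := congrArg (fun x => ((l₁ : F) - l₂)⁻¹ • x) h3
      simpa [smul_smul, inv_mul_cancel₀ hne'] using this
    exact sub_eq_zero.1 h0
  -- conclude u commutes with a
  have h4 : (algebraMap F R l₁ - (u : R)) * a = a * (algebraMap F R l₁ - (u : R)) := by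
    rw [← hWval l₁, h1, ← hab]
  rw [sub_mul, mul_sub, Algebra.commutes (l₁ : F) a] at h4
  exact sub_right_injective h4

/-- Over an infinite field, every finite-order element of `ΔU` commutes
with every element of `∇(R)`; in particular any two finite-order elements of `ΔU`
commute, so `t(ΔU)` is abelian. -/
theorem torsion_fcRadical_abelian (F : Type*) [Field F] [Infinite F]
    (R : Type*) [Ring R] [Algebra F R] :
    (∀ u : Rˣ, u ∈ FCRadical R → IsOfFinOrder u →
      ∀ a ∈ FCSubring R, (u : R) * a = a * (u : R)) ∧
    (∀ u v : Rˣ, u ∈ FCRadical R → v ∈ FCRadical R →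
      IsOfFinOrder u → IsOfFinOrder v → u * v = v * u) := by
  refine ⟨finOrder_comm_FCSubring F R, ?_⟩
  intro u v hu hv hfu hfv
  have hva : (v : R) ∈ FCSubring R := hv
  have := finOrder_comm_FCSubring F R u hu hfu (v : R) hva
  ext
  simpa [Units.val_mul] using this
end

section
/- Let R be an algebra over an infinite field F. Then the FC-radical ΔU = {u ∈ U(R) : [U(R) : C_{U(R)}(u)] < ∞} is a nilpotent group of nilpotency class at most 2; that is, every commutator of two elements of ΔU is central in ΔU. -/
section AuxLemmas

open Finset in
/-- Pigeonhole lemma: a unit `c` with `c^m = 1` commutes with every unit whose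
centralizer has finite index, over an infinite field of scalars. -/
lemma torsion_comm_of_finiteIndex (F : Type*) [Field F] [Infinite F]
    {R : Type*} [Ring R] [Algebra F R] [Nontrivial R] {c w : Rˣ}
    (hw : (unitCentralizer (w : R)).FiniteIndex)
    {m : ℕ} (hm : m ≠ 0) (hc : (c : R) ^ m = 1) :
    (c : R) * (w : R) = (w : R) * (c : R) := by
  classical
  haveI := hw
  set cc : R := (c : R) with hccdef
  set wv : R := (w : R) with hwvdef
  -- the set of `m`-th roots of unity in `F` is finite
  have hSfin : {l : F | l ^ m = 1}.Finite := by
    apply Set.Finite.subset (Polynomial.nthRoots m (1 : F)).toFinset.finite_toSet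
    intro l hl
    simp only [Finset.mem_coe, Multiset.mem_toFinset,
      Polynomial.mem_nthRoots (Nat.pos_of_ne_zero hm)]
    exact hl
  have hΛ : {l : F | l ^ m = 1}ᶜ.Infinite := hSfin.infinite_compl
  haveI : Infinite ({l : F | l ^ m = 1}ᶜ : Set F) := hΛ.to_subtype
  -- the candidate units `λ•1 - c` with explicit inverses
  set x : F → R := fun l => algebraMap F R l - cc with hxdef
  set t : F → R := fun l =>
    algebraMap F R (l ^ m - 1)⁻¹ *
      ∑ i ∈ Finset.range m, (algebraMap F R l) ^ i * cc ^ (m - 1 - i) with htdef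
  have hcomm : ∀ l : F, Commute (algebraMap F R l) cc := fun l => Algebra.commutes l cc
  have hsum : ∀ l : F,
      (∑ i ∈ Finset.range m, (algebraMap F R l) ^ i * cc ^ (m - 1 - i)) * x l
        = algebraMap F R (l ^ m - 1) := by
    intro l
    rw [hxdef]
    rw [(hcomm l).geom_sum₂_mul, hc, map_sub, map_pow, map_one]
  have hsum' : ∀ l : F,
      x l * (∑ i ∈ Finset.range m, (algebraMap F R l) ^ i * cc ^ (m - 1 - i))
        = algebraMap F R (l ^ m - 1) := by
    intro l
    rw [hxdef]
    rw [(hcomm l).mul_geom_sum₂, hc, map_sub, map_pow, map_one]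
  have hscal : ∀ l : F, l ^ m ≠ 1 →
      algebraMap F R (l ^ m - 1)⁻¹ * algebraMap F R (l ^ m - 1) = 1 := by
    intro l hl
    rw [← map_mul, inv_mul_cancel₀ (sub_ne_zero.mpr hl), map_one]
  have htx : ∀ l : F, l ^ m ≠ 1 → t l * x l = 1 := by
    intro l hl
    rw [htdef]
    dsimp only
    rw [mul_assoc, hsum l, hscal l hl]
  have hxt : ∀ l : F, l ^ m ≠ 1 → x l * t l = 1 := by
    intro l hl
    rw [htdef]
    dsimp only
    rw [← mul_assoc, ← Algebra.commutes ((l ^ m - 1)⁻¹) (x l), mul_assoc, hsum' l, hscal l hl]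
  -- the units
  set g : ({l : F | l ^ m = 1}ᶜ : Set F) → Rˣ := fun p =>
    ⟨x p.1, t p.1, hxt p.1 p.2, htx p.1 p.2⟩ with hgdef
  -- pigeonhole into the cosets of the centralizer of `w`
  obtain ⟨p, q, hpq, heq⟩ :=
    Finite.exists_ne_map_eq_of_infinite
      (fun p => ((g p : Rˣ) : Rˣ ⧸ unitCentralizer wv))
  have hmem : (g p)⁻¹ * g q ∈ unitCentralizer wv := QuotientGroup.eq.mp heq
  have hne : (q : F) - (p : F) ≠ 0 := by
    refine sub_ne_zero.mpr ?_
    intro h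
    exact hpq (Subtype.ext h.symm)
  -- compute the value of `(g p)⁻¹ * g q`
  have hval : (((g p)⁻¹ * g q : Rˣ) : R) = 1 + t p.1 * algebraMap F R ((q : F) - (p : F)) := by
    have h1 : (((g p)⁻¹ * g q : Rˣ) : R) = t p.1 * x q.1 := by
      rw [Units.val_mul]
      rfl
    have h2 : x q.1 = x p.1 + algebraMap F R ((q : F) - (p : F)) := by
      rw [hxdef]
      dsimp only
      rw [map_sub]
      abel
    rw [h1, h2, mul_add, htx p.1 p.2]
  -- membership in the centralizer gives a scalar relation
  have hrel : (1 + t p.1 * algebraMap F R ((q : F) - (p : F))) * wv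
      = wv * (1 + t p.1 * algebraMap F R ((q : F) - (p : F))) := by
    have := (mem_unitCentralizer.mp hmem)
    rwa [hval] at this
  set d : R := algebraMap F R ((q : F) - (p : F)) with hddef
  have hrel2 : (t p.1 * wv) * d = (wv * t p.1) * d := by
    have h3 : t p.1 * d * wv = wv * (t p.1 * d) := by
      have := hrel
      rw [add_mul, mul_add, one_mul, mul_one] at this
      exact add_left_cancel this
    calc (t p.1 * wv) * d = t p.1 * (wv * d) := mul_assoc _ _ _
      _ = t p.1 * (d * wv) := by rw [← Algebra.commutes ((q : F) - (p : F)) wv]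
      _ = t p.1 * d * wv := (mul_assoc _ _ _).symm
      _ = wv * (t p.1 * d) := h3
      _ = (wv * t p.1) * d := (mul_assoc _ _ _).symm
  have hde : d * algebraMap F R (((q : F) - (p : F))⁻¹) = 1 := by
    rw [hddef, ← map_mul, mul_inv_cancel₀ hne, map_one]
  have htw : t p.1 * wv = wv * t p.1 := by
    calc t p.1 * wv = (t p.1 * wv) * (d * algebraMap F R (((q : F) - (p : F))⁻¹)) := by
          rw [hde, mul_one]
      _ = ((t p.1 * wv) * d) * algebraMap F R (((q : F) - (p : F))⁻¹) := (mul_assoc _ _ _).symm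
      _ = ((wv * t p.1) * d) * algebraMap F R (((q : F) - (p : F))⁻¹) := by rw [hrel2]
      _ = (wv * t p.1) * (d * algebraMap F R (((q : F) - (p : F))⁻¹)) := mul_assoc _ _ _
      _ = wv * t p.1 := by rw [hde, mul_one]
  -- hence `x p` commutes with `w`
  have hxw : x p.1 * wv = wv * x p.1 := by
    have e0 : x p.1 * (t p.1 * wv) * x p.1 = x p.1 * (wv * t p.1) * x p.1 := by rw [htw]
    have e1 : x p.1 * (t p.1 * wv) * x p.1 = wv * x p.1 := by
      rw [← mul_assoc, hxt p.1 p.2, one_mul]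
    have e2 : x p.1 * (wv * t p.1) * x p.1 = x p.1 * wv := by
      rw [mul_assoc (x p.1) (wv * t p.1), mul_assoc wv, htx p.1 p.2, mul_one]
    rw [e1, e2] at e0
    exact e0.symm
  -- hence `c` commutes with `w`
  have hccx : cc = algebraMap F R (p : F) - x p.1 := by
    rw [hxdef]
    dsimp only
    abel
  rw [hccx, sub_mul, mul_sub, hxw, Algebra.commutes]

open scoped commutatorElement in
/-- Schur-type lemma via the transfer map: the commutator of two FC-units is torsion. -/
lemma fc_commutator_torsion {R : Type*} [Ring R] {u v : Rˣ}
    (hu : (unitCentralizer (u : R)).FiniteIndex)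
    (hv : (unitCentralizer (v : R)).FiniteIndex) :
    ∃ m : ℕ, m ≠ 0 ∧ ((u⁻¹ * v⁻¹ * u * v : Rˣ) : R) ^ m = 1 := by
  classical
  set G : Subgroup Rˣ := Subgroup.closure ({u, v} : Set Rˣ) with hGdef
  have huG : u ∈ G := Subgroup.subset_closure (by simp)
  have hvG : v ∈ G := Subgroup.subset_closure (by simp)
  haveI := hu
  haveI := hv
  set K : Subgroup G := (unitCentralizer (u : R) ⊓ unitCentralizer (v : R)).subgroupOf G
    with hKdef
  haveI : K.FiniteIndex := Subgroup.instFiniteIndex_subgroupOf _ _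
  have hKle : K ≤ Subgroup.center G := by
    intro g hg
    rw [hKdef, Subgroup.mem_subgroupOf, Subgroup.mem_inf] at hg
    obtain ⟨hg1, hg2⟩ := hg
    rw [Subgroup.mem_center_iff]
    intro b
    have hbmem : (b : Rˣ) ∈ Subgroup.centralizer {((g : Rˣ))} := by
      refine (Subgroup.closure_le _).mpr ?_ b.2
      intro y hy
      rw [SetLike.mem_coe, Subgroup.mem_centralizer_iff]
      intro z hz
      rw [Set.mem_singleton_iff] at hz
      subst hz
      rcases hy with rfl | hy
      · exact Units.ext (by simp only [Units.val_mul]; exact hg1)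
      · rw [Set.mem_singleton_iff] at hy
        subst hy
        exact Units.ext (by simp only [Units.val_mul]; exact hg2)
    have := Subgroup.mem_centralizer_iff.mp hbmem ((g : Rˣ)) rfl
    exact Subtype.ext this.symm
  haveI : (Subgroup.center G).FiniteIndex := Subgroup.finiteIndex_of_le hKle
  refine ⟨(Subgroup.center (G : Subgroup Rˣ)).index, Subgroup.FiniteIndex.index_ne_zero, ?_⟩
  set u' : G := ⟨u, huG⟩ with hu'def
  set v' : G := ⟨v, hvG⟩ with hv'def
  set cG : G := u'⁻¹ * v'⁻¹ * u' * v' with hcGdef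
  have hcGcomm : cG = ⁅u'⁻¹, v'⁻¹⁆ := by
    rw [commutatorElement_def, inv_inv, inv_inv]
  have h1 : MonoidHom.transferCenterPow G cG = 1 := by
    rw [hcGcomm, map_commutatorElement, commutatorElement_eq_one_iff_commute]
    exact Subtype.ext (Subgroup.mem_center_iff.mp
      (MonoidHom.transferCenterPow G v'⁻¹).2 ((MonoidHom.transferCenterPow G u'⁻¹) : G))
  have h2 : cG ^ (Subgroup.center (G : Subgroup Rˣ)).index = 1 := by
    have h3 := MonoidHom.transferCenterPow_apply (G := G) cG
    rw [h1] at h3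
    exact h3.symm
  have h4 : (u⁻¹ * v⁻¹ * u * v : Rˣ) ^ (Subgroup.center (G : Subgroup Rˣ)).index = 1 := by
    have h5 := congrArg (fun z : G => (z : Rˣ)) h2
    simpa [hcGdef, hu'def, hv'def] using h5
  have h6 := congrArg (fun z : Rˣ => (z : R)) h4
  simpa using h6

end AuxLemmas

/-- Over an infinite field, `ΔU` is nilpotent of class at most 2: every
commutator of two elements of `ΔU` is central in `ΔU`. -/
theorem fcRadical_nilpotent_class_two (F : Type*) [Field F] [Infinite F]
    (R : Type*) [Ring R] [Algebra F R] :
    ∀ u ∈ FCRadical R, ∀ v ∈ FCRadical R, ∀ w ∈ FCRadical R,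
      (u⁻¹ * v⁻¹ * u * v) * w = w * (u⁻¹ * v⁻¹ * u * v) := by
  intro u hu v hv w hw
  rcases subsingleton_or_nontrivial R with hR | hR
  · haveI : Subsingleton Rˣ := ⟨fun a b => Units.ext (Subsingleton.elim _ _)⟩
    exact Subsingleton.elim _ _
  · obtain ⟨m, hm, hcm⟩ := fc_commutator_torsion (mem_FCRadical.mp hu) (mem_FCRadical.mp hv)
    have h := torsion_comm_of_finiteIndex F (mem_FCRadical.mp hw) hm hcm
    exact Units.ext (by simp only [Units.val_mul]; exact h)
end

section
/- Let R be an algebra over an infinite field F such that every unit of R is algebraic over F. Then the FC-radical ΔU = {u ∈ U(R) : [U(R) : C_{U(R)}(u)] < ∞} is contained in the center of the group U(R). -/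
open Polynomial



theorem unit_comm_of_finiteIndex_centralizer (F : Type*) [Field F] [Infinite F]
    (R : Type*) [Ring R] [Algebra F R] (u v : Rˣ)
    (hu : (unitCentralizer (u : R)).FiniteIndex)
    (halgv : IsAlgebraic F (v : R)) :
    (v : R) * (u : R) = (u : R) * (v : R) := by
  haveI := hu
  set H := unitCentralizer (u : R) with hH
  haveI : Finite (Rˣ ⧸ H) := H.finite_quotient_of_finiteIndex
  have hwd : ∀ (a b : Rˣ), (QuotientGroup.leftRel H) a b →
      ((a * u * a⁻¹ : Rˣ) : R) = ((b * u * b⁻¹ : Rˣ) : R) := by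
    intro a b hab
    rw [QuotientGroup.leftRel_apply] at hab
    have hc : ((a⁻¹ * b : Rˣ) : R) * (u : R) = (u : R) * ((a⁻¹ * b : Rˣ) : R) := hab
    have h1 : (a⁻¹ * b) * u = u * (a⁻¹ * b) := Units.ext hc
    have h2 : b * u * b⁻¹ = a * u * a⁻¹ := by
      have := congrArg (fun x => a * x * b⁻¹) h1
      simpa [mul_assoc] using this
    rw [h2]
  let f : Rˣ ⧸ H → R := Quotient.lift (fun a : Rˣ => ((a * u * a⁻¹ : Rˣ) : R)) hwd
  have hT : (Set.range f).Finite := Set.finite_range f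
  obtain ⟨p, hp0, hpv⟩ := halgv
  have hroots : {x : F | p.IsRoot x}.Finite := p.finite_setOf_isRoot hp0
  have hΛ : ({x : F | p.IsRoot x}ᶜ).Infinite := hroots.infinite_compl
  -- unit construction
  have hunit : ∀ lam : F, p.eval lam ≠ 0 →
      ∃ w : Rˣ, (w : R) = (v : R) - algebraMap F R lam := by
    intro lam hl
    set q := p /ₘ (X - C lam) with hq
    have key : p = (X - C lam) * q + C (p.eval lam) := by
      conv_lhs => rw [← Polynomial.modByMonic_add_div p (X - C lam)]
      rw [Polynomial.modByMonic_X_sub_C_eq_C_eval]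
      ring
    have key2 : ((v:R) - algebraMap F R lam) * aeval (v:R) q
        = - algebraMap F R (p.eval lam) := by
      have h0 := congrArg (aeval (v:R)) key
      rw [hpv] at h0
      simp only [map_add, map_mul, map_sub, aeval_X, aeval_C] at h0
      exact eq_neg_of_add_eq_zero_left h0.symm
    have hcomm : (v:R) * aeval (v:R) q = aeval (v:R) q * (v:R) := by
      simpa only [map_mul, aeval_X] using congrArg (aeval (v:R)) (mul_comm X q)
    have hcomm2 : ((v:R) - algebraMap F R lam) * aeval (v:R) q
        = aeval (v:R) q * ((v:R) - algebraMap F R lam) := by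
      rw [sub_mul, mul_sub, hcomm, Algebra.commutes]
    refine ⟨⟨(v : R) - algebraMap F R lam,
      aeval (v:R) q * (- algebraMap F R ((p.eval lam)⁻¹)), ?_, ?_⟩, rfl⟩
    · rw [← mul_assoc, key2, neg_mul_neg, ← map_mul, mul_inv_cancel₀ hl, map_one]
    · rw [mul_assoc]
      rw [show (-(algebraMap F R) ((p.eval lam)⁻¹) * ((v:R) - algebraMap F R lam))
          = ((v:R) - algebraMap F R lam) * (-(algebraMap F R) ((p.eval lam)⁻¹)) from by
            rw [neg_mul, mul_neg, Algebra.commutes],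
        ← mul_assoc, ← hcomm2, key2, neg_mul_neg, ← map_mul, mul_inv_cancel₀ hl, map_one]
  -- pigeonhole on conjugates
  classical
  let g : F → R := fun lam =>
    ((v : R) - algebraMap F R lam) * (u : R) * Ring.inverse ((v : R) - algebraMap F R lam)
  have hmaps : Set.MapsTo g ({x : F | p.IsRoot x}ᶜ) (Set.range f) := by
    intro lam hlam
    have hl : p.eval lam ≠ 0 := hlam
    obtain ⟨w, hw⟩ := hunit lam hl
    refine ⟨⟦w⟧, ?_⟩
    show ((w * u * w⁻¹ : Rˣ) : R) = g lam
    simp only [g, ← hw, Ring.inverse_unit, Units.val_mul]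
  obtain ⟨l₁, hl₁, l₂, hl₂, hne, heq⟩ :=
    hΛ.exists_ne_map_eq_of_mapsTo hmaps hT
  obtain ⟨w₁, hw₁⟩ := hunit l₁ hl₁
  obtain ⟨w₂, hw₂⟩ := hunit l₂ hl₂
  -- g l₁ = val of w₁ * u * w₁⁻¹ etc.
  have hg1 : g l₁ = ((w₁ * u * w₁⁻¹ : Rˣ) : R) := by
    simp only [g, ← hw₁, Ring.inverse_unit, Units.val_mul]
  have hg2 : g l₂ = ((w₂ * u * w₂⁻¹ : Rˣ) : R) := by
    simp only [g, ← hw₂, Ring.inverse_unit, Units.val_mul]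
  have hcu : w₁ * u * w₁⁻¹ = w₂ * u * w₂⁻¹ :=
    Units.ext (by rw [← hg1, ← hg2, heq])
  have e1 : ((w₁ * u * w₁⁻¹ : Rˣ) : R) * (w₁ : R) = (w₁ : R) * (u : R) := by
    have h : (w₁ * u * w₁⁻¹) * w₁ = w₁ * u := by group
    exact_mod_cast congrArg Units.val h
  have e2 : ((w₁ * u * w₁⁻¹ : Rˣ) : R) * (w₂ : R) = (w₂ : R) * (u : R) := by
    have h : (w₁ * u * w₁⁻¹) * w₂ = w₂ * u := by rw [hcu]; group
    exact_mod_cast congrArg Units.val h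
  have esub : ((w₁ * u * w₁⁻¹ : Rˣ) : R) * ((w₁ : R) - (w₂ : R))
      = ((w₁ : R) - (w₂ : R)) * (u : R) := by
    rw [mul_sub, sub_mul, e1, e2]
  have hdiff : (w₁ : R) - (w₂ : R) = algebraMap F R (l₂ - l₁) := by
    rw [hw₁, hw₂, map_sub]; abel
  rw [hdiff] at esub
  have hsmul : (l₂ - l₁) • ((w₁ * u * w₁⁻¹ : Rˣ) : R) = (l₂ - l₁) • ((u : Rˣ) : R) := by
    rw [Algebra.smul_def, Algebra.smul_def, ← esub]
    exact Algebra.commutes _ _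
  have hμ : l₂ - l₁ ≠ 0 := sub_ne_zero.mpr (Ne.symm hne)
  have hcueq : ((w₁ * u * w₁⁻¹ : Rˣ) : R) = (u : R) := by
    have := congrArg (fun x => (l₂ - l₁)⁻¹ • x) hsmul
    simpa [smul_smul, inv_mul_cancel₀ hμ] using this
  have e1' : (u : R) * (w₁ : R) = (w₁ : R) * (u : R) := by
    calc (u : R) * (w₁ : R) = ((w₁ * u * w₁⁻¹ : Rˣ) : R) * (w₁ : R) := by rw [hcueq]
    _ = (w₁ : R) * (u : R) := e1
  rw [hw₁] at e1'
  have h3 : (u:R) * (v:R) - (u:R) * algebraMap F R l₁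
      = (v:R) * (u:R) - algebraMap F R l₁ * (u:R) := by
    rw [← mul_sub, ← sub_mul, e1']
  rw [Algebra.commutes] at h3
  exact (sub_left_inj.mp h3).symm

/-- Over an infinite field, if every unit of `R` is algebraic over `F`,
then `ΔU` is contained in the center of `U(R)`. -/
theorem fcRadical_central_of_all_units_algebraic (F : Type*) [Field F] [Infinite F]
    (R : Type*) [Ring R] [Algebra F R]
    (halg : ∀ u : Rˣ, IsAlgebraic F (u : R)) :
    FCRadical R ≤ Subgroup.center Rˣ := by
  intro u hu
  rw [Subgroup.mem_center_iff]
  intro g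
  have hfi : (unitCentralizer (u : R)).FiniteIndex := hu
  have h := unit_comm_of_finiteIndex_centralizer F R u g hfi (halg g)
  exact Units.ext h
end
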